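/- arXiv:1407.3761 — 6 statements merged into one kernel-verified Lean document; each statement's English description precedes it below -/
import Mathlib

section
/- Let q = p^r be a prime power, B = F_q[X] with derivation d = d/dX, and M = B^n with the trivial connection ∇(f_1,...,f_n) = (f_1',...,f_n'). If n > q then M admits no cyclic vector. -/
lemma iterate_componentwise {K : Type} [Field K] {n : ℕ} (k : ℕ)
    (m : Fin n → Polynomial K) (j : Fin n) :
    ((fun f (j : Fin n) => Polynomial.derivative (f j))^[k] m) j
      = (Polynomial.derivative)^[k] (m j) := by
  induction k generalizing m with
  | zero => rfl
  | succ k ih =>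
    rw [Function.iterate_succ_apply, Function.iterate_succ_apply, ih]

lemma iterate_derivative_char_eq_zero {K : Type} [Field K] (p : ℕ) [hp : Fact p.Prime]
    [CharP K p] (f : Polynomial K) : (Polynomial.derivative)^[p] f = 0 := by
  ext m
  rw [Polynomial.coeff_iterate_derivative, Polynomial.coeff_zero]
  have hdvd : p ∣ (m + p).descFactorial p :=
    dvd_trans (Nat.dvd_factorial hp.out.pos le_rfl) (Nat.factorial_dvd_descFactorial _ _)
  rw [nsmul_eq_mul]
  obtain ⟨c, hc⟩ := hdvd
  rw [hc]
  push_cast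
  rw [CharP.cast_eq_zero K p, zero_mul, zero_mul]

/-- Over `𝔽_q[X]` with `q = p^r`, the trivial connection (componentwise derivative)
on `(𝔽_q[X])^n` with `n > q` admits no cyclic vector. -/
theorem stmt1 (p r : ℕ) (hp : p.Prime) (K : Type) [Field K] [Fintype K]
    (hK : Fintype.card K = p ^ r) (n : ℕ) (hn : p ^ r < n) :
    ¬ ∃ (m : Fin n → Polynomial K)
        (b : Module.Basis (Fin n) (Polynomial K) (Fin n → Polynomial K)),
        ∀ i : Fin n, b i = (fun f j => Polynomial.derivative (f j))^[(i : ℕ)] m := by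
  rintro ⟨m, b, hb⟩
  -- r ≥ 1
  have hr : r ≠ 0 := by
    rintro rfl
    simp only [pow_zero] at hK
    exact absurd hK (by have := Fintype.one_lt_card (α := K); omega)
  have hfact : Fact p.Prime := ⟨hp⟩
  -- characteristic of K is p
  have hchar : CharP K p := by
    obtain ⟨q, hc⟩ := CharP.exists K
    have hq : q.Prime := @CharP.char_is_prime K _ _ _ _ q hc
    obtain ⟨m', hcard⟩ := @FiniteField.card K _ _ q hc
    have : p ∣ q ^ (m' : ℕ) := by
      rw [← hcard.2, hK]
      exact dvd_pow_self p hr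
    have hpq : p = q := (Nat.prime_dvd_prime_iff_eq hp hq).mp (hp.prime.dvd_of_dvd_pow this)
    subst hpq
    exact hc
  have hpn : p < n := lt_of_le_of_lt (Nat.le_self_pow hr p) hn
  have hzero : b ⟨p, hpn⟩ = 0 := by
    rw [hb ⟨p, hpn⟩]
    funext j
    rw [iterate_componentwise]
    exact iterate_derivative_char_eq_zero p (m j)
  exact b.ne_zero _ hzero
end

section
/- Let (B, d) be a commutative ring with derivation extended to B[X] by d(X) = 1, M a differential module of rank n over B with (n−1)! invertible in B, and c_0 = Σ_{j=0}^{n-1} c_{0,j} X^j ∈ M ⊗ B[X] a polynomial of degree ≤ n−1. Writing c_{k,0} for the constant term (coefficient of X^0) of ∇^k(c_0), one has the inversion formula c_{0,j} = (1/j!) Σ_{k=0}^{j} (−1)^{j−k} C(j,k) ∇^{j−k}(c_{k,0}) for j = 0, ..., n−1. In particular, the constant terms of c_0, ∇(c_0), ..., ∇^{n-1}(c_0) uniquely determine c_0. -/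
/-- Iterates of an additive map are additive monoid homs. -/
private lemma iter_hom_exists {M : Type*} [AddCommGroup M] (nab : M → M)
    (hadd : ∀ x y, nab (x + y) = nab x + nab y) (t : ℕ) :
    ∃ F : M →+ M, ∀ x, F x = nab^[t] x := by
  induction t with
  | zero => exact ⟨AddMonoidHom.id M, fun x => rfl⟩
  | succ t ih =>
      obtain ⟨F, hF⟩ := ih
      refine ⟨(AddMonoidHom.mk' nab hadd).comp F, fun x => ?_⟩
      simp [hF, Function.iterate_succ_apply']

/-- Inversion formula: if `c₀ = Σ_{j<n} c_{0,j} X^j` has degree `≤ n−1` and `c_{k,0}`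
denotes the constant term of `∇^k(c₀)` (coefficients encoded by the recursion
`c_{i+1,j} = ∇(c_{i,j}) + (j+1)·c_{i,j+1}`), then for `j < n`,
`c_{0,j} = (1/j!) Σ_{k=0}^{j} (−1)^{j−k} C(j,k) ∇^{j−k}(c_{k,0})`. -/
theorem stmt6 (B M : Type) [CommRing B] [AddCommGroup M] [Module B M]
    (n : ℕ) (hinv : IsUnit ((Nat.factorial (n - 1) : B)))
    (d : B → B)
    (hd_add : ∀ x y, d (x + y) = d x + d y)
    (hd_mul : ∀ x y, d (x * y) = x * d y + d x * y)
    (nab : M → M) (hadd : ∀ x y, nab (x + y) = nab x + nab y)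
    (hL : ∀ (b : B) (m : M), nab (b • m) = d b • m + b • nab m)
    (c : ℕ → ℕ → M)
    (hrec : ∀ i j, c (i + 1) j = nab (c i j) + (j + 1) • c i (j + 1))
    (hdeg : ∀ j, n ≤ j → c 0 j = 0)
    (j : ℕ) (hj : j < n) :
    c 0 j = Ring.inverse ((Nat.factorial j : B)) •
      ∑ k ∈ Finset.range (j + 1),
        ((-1 : ℤ) ^ (j - k) * (j.choose k : ℤ)) • nab^[j - k] (c k 0) := by
  -- Key closed formula for `c k q`.
  have key : ∀ k q, c k q = ∑ m ∈ Finset.range (k + 1),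
      (k.choose m * (q + m).descFactorial m) • nab^[k - m] (c 0 (q + m)) := by
    intro k
    induction k with
    | zero => intro q; simp
    | succ k ih =>
        intro q
        rw [hrec, ih q, ih (q + 1)]
        -- LHS pieces
        obtain ⟨F, hF⟩ := iter_hom_exists nab hadd 1
        have hnab_sum : nab (∑ m ∈ Finset.range (k + 1),
            (k.choose m * (q + m).descFactorial m) • nab^[k - m] (c 0 (q + m)))
            = ∑ m ∈ Finset.range (k + 1),
            (k.choose m * (q + m).descFactorial m) • nab^[k + 1 - m] (c 0 (q + m)) := by
          have : nab = ⇑F := by funext x; simp [hF]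
          rw [this, map_sum]
          refine Finset.sum_congr rfl fun m hm => ?_
          rw [map_nsmul]
          congr 1
          rw [← this]
          have hm' : m ≤ k := by simpa [Nat.lt_succ_iff] using hm
          have : k + 1 - m = (k - m) + 1 := by omega
          rw [this, Function.iterate_succ_apply']
        rw [hnab_sum]
        rw [Finset.smul_sum]
        -- rewrite the second sum
        have h2 : ∀ m, (q + 1) • ((k.choose m * (q + 1 + m).descFactorial m) •
              nab^[k - m] (c 0 (q + 1 + m)))
            = (k.choose m * (q + (m+1)).descFactorial (m+1)) • nab^[k - m] (c 0 (q + (m+1))) := by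
          intro m
          have e : q + 1 + m = q + (m + 1) := by omega
          rw [smul_smul, e]
          congr 1
          have : (q + (m+1)).descFactorial (m+1) = (q+1) * (q + (m+1)).descFactorial m := by
            rw [Nat.descFactorial_succ]
            congr 1
            omega
          rw [this]; ring
        simp only [h2]
        -- RHS: split off the first term
        rw [Finset.sum_range_succ' (fun m => ((k+1).choose m * (q + m).descFactorial m) •
              nab^[k + 1 - m] (c 0 (q + m)))]
        rw [Finset.sum_range_succ' (fun m => (k.choose m * (q + m).descFactorial m) •
              nab^[k + 1 - m] (c 0 (q + m)))]
        simp only [Nat.choose_succ_succ, add_mul, add_smul, Finset.sum_add_distrib]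
        have hlast : ∑ m ∈ Finset.range k,
              (k.choose (m+1) * (q + (m+1)).descFactorial (m+1)) • nab^[k + 1 - (m+1)] (c 0 (q + (m+1)))
            = ∑ m ∈ Finset.range (k+1),
              (k.choose (m+1) * (q + (m+1)).descFactorial (m+1)) • nab^[k + 1 - (m+1)] (c 0 (q + (m+1))) := by
          rw [Finset.sum_range_succ]
          simp [Nat.choose_succ_self]
        rw [hlast]
        simp only [Nat.succ_sub_succ, Nat.succ_eq_add_one, Nat.choose_zero_right]
        abel
  -- coefficient identity: alternating sum collapses
  have hco : ∀ m, m < j + 1 →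
      (∑ k ∈ Finset.Ico m (j+1),
        ((-1:ℤ)^(j-k) * (j.choose k : ℤ) * ((k.choose m * m.factorial : ℕ) : ℤ)))
      = if m = j then (j.factorial : ℤ) else 0 := by
    intro m hm
    have hmj : m ≤ j := by omega
    have step : ∀ k ∈ Finset.Ico m (j+1),
        (-1:ℤ)^(j-k) * (j.choose k : ℤ) * ((k.choose m * m.factorial : ℕ) : ℤ)
        = ((j.choose m * m.factorial : ℕ) : ℤ) * ((-1:ℤ)^(j-k) * ((j-m).choose (k-m) : ℤ)) := by
      intro k hk
      obtain ⟨h1, h2⟩ := Finset.mem_Ico.mp hk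
      have h := Nat.choose_mul (n := j) (k := k) h1
      have h' : (j.choose k : ℤ) * (k.choose m : ℤ)
          = (j.choose m : ℤ) * ((j-m).choose (k-m) : ℤ) := by exact_mod_cast congrArg (Nat.cast : ℕ → ℤ) h
      push_cast
      linear_combination ((-1:ℤ)^(j-k) * (m.factorial : ℤ)) * h'
    rw [Finset.sum_congr rfl step, ← Finset.mul_sum]
    rw [Finset.sum_Ico_eq_sum_range]
    have e1 : j + 1 - m = (j - m) + 1 := by omega
    rw [e1]
    have e2 : ∀ t ∈ Finset.range ((j-m)+1),
        (-1:ℤ)^(j-(m+t)) * (((j-m).choose (m+t-m) : ℕ) : ℤ)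
        = (-1:ℤ)^(j-m) * ((-1:ℤ)^t * ((j-m).choose t : ℤ)) := by
      intro t ht
      have ht' : t ≤ j - m := by simpa [Nat.lt_succ_iff] using ht
      have ea : m + t - m = t := by omega
      have eb : j - (m+t) = (j-m) - t := by omega
      rw [ea, eb]
      have hs : (-1:ℤ)^((j-m)-t) * (-1:ℤ)^t = (-1:ℤ)^(j-m) := by
        rw [← pow_add]; congr 1; omega
      have h1 : (-1:ℤ)^t * (-1:ℤ)^t = 1 := by
        rw [← pow_add]; exact Even.neg_one_pow ⟨t, rfl⟩
      rw [← hs]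
      generalize (-1:ℤ)^t = b at h1 ⊢
      linear_combination (-((-1:ℤ)^((j-m)-t) * (((j-m).choose t : ℕ) : ℤ))) * h1
    rw [Finset.sum_congr rfl e2, ← Finset.mul_sum, Int.alternating_sum_range_choose]
    by_cases hmeq : m = j
    · subst hmeq; simp [Nat.sub_self]
    · have hne : j - m ≠ 0 := by omega
      simp [hne, hmeq]
  -- rewrite each summand using the key formula
  have hck : ∀ k, k ≤ j → nab^[j-k] (c k 0)
      = ∑ m ∈ Finset.range (k+1), (k.choose m * m.factorial) • nab^[j - m] (c 0 m) := by
    intro k hk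
    obtain ⟨F, hF⟩ := iter_hom_exists nab hadd (j-k)
    have hFe : nab^[j-k] = ⇑F := by funext x; rw [hF]
    rw [key k 0, hFe, map_sum]
    refine Finset.sum_congr rfl fun m hm => ?_
    rw [map_nsmul]
    have hm' : m ≤ k := by simpa [Nat.lt_succ_iff] using hm
    rw [hF, ← Function.iterate_add_apply]
    have e : j - k + (k - m) = j - m := by omega
    rw [e]
    simp [Nat.descFactorial_self]
  have hbig : ∑ k ∈ Finset.range (j + 1),
      ((-1:ℤ)^(j-k) * (j.choose k : ℤ)) • nab^[j-k] (c k 0) = (j.factorial : ℕ) • c 0 j := by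
    have h1 : ∀ k ∈ Finset.range (j+1), ((-1:ℤ)^(j-k) * (j.choose k : ℤ)) • nab^[j-k] (c k 0)
        = ∑ m ∈ Finset.range (k+1),
            ((-1:ℤ)^(j-k) * (j.choose k : ℤ) * ((k.choose m * m.factorial : ℕ) : ℤ)) •
              nab^[j-m] (c 0 m) := by
      intro k hk
      rw [hck k (by simpa [Nat.lt_succ_iff] using hk), Finset.smul_sum]
      refine Finset.sum_congr rfl fun m hm => ?_
      rw [← natCast_zsmul, smul_smul]
    rw [Finset.sum_congr rfl h1]
    have hswap := Finset.sum_Ico_Ico_comm 0 (j+1) (fun m k =>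
        ((-1:ℤ)^(j-k) * (j.choose k : ℤ) * ((k.choose m * m.factorial : ℕ) : ℤ)) •
          nab^[j-m] (c 0 m))
    simp only [Finset.range_eq_Ico]
    rw [← hswap]
    have h2 : ∀ m ∈ Finset.Ico 0 (j+1),
        (∑ k ∈ Finset.Ico m (j+1),
          ((-1:ℤ)^(j-k) * (j.choose k : ℤ) * ((k.choose m * m.factorial : ℕ) : ℤ)) •
            nab^[j-m] (c 0 m))
        = (if m = j then (j.factorial : ℤ) else 0) • nab^[j-m] (c 0 m) := by
      intro m hm
      rw [← Finset.sum_smul, hco m (by simpa using (Finset.mem_Ico.mp hm).2)]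
    rw [Finset.sum_congr rfl h2]
    rw [Finset.sum_eq_single_of_mem j (by simp)]
    · simp [natCast_zsmul]
    · intro b hb hne
      simp [hne]
  rw [hbig]
  have hdvd : ((j.factorial : ℕ) : B) ∣ (((n-1).factorial : ℕ) : B) :=
    Nat.cast_dvd_cast (Nat.factorial_dvd_factorial (by omega))
  have hu : IsUnit ((j.factorial : ℕ) : B) := isUnit_of_dvd_unit hdvd hinv
  rw [← Nat.cast_smul_eq_nsmul B, smul_smul, Ring.inverse_mul_cancel _ hu, one_smul]
end

section
/- Let (B, d) be a commutative ring with derivation, t ∈ B with d(t) = 1, M a rank-n differential module with basis e_0, ..., e_{n-1}, and (n−1)! invertible in B. Define the Katz vector c(e, X) = Σ_{j=0}^{n-1} (X^j / j!) Σ_{k=0}^{j} (−1)^k C(j,k) ∇^k(e_{j−k}) in M ⊗ B[X]. Then the matrix H(X) expressing {c, ∇c, ..., ∇^{n-1}c} in the basis e satisfies H(0) = Id. Consequently det H(X) is a polynomial P(X) ∈ B[X] with P(0) = 1. -/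
/-- Extension of a basis indexed by `Fin n` to a family indexed by `ℕ` (zero outside). -/
noncomputable def eext {B M : Type} [CommRing B] [AddCommGroup M] [Module B M] {n : ℕ}
    (e : Module.Basis (Fin n) B M) (l : ℕ) : M :=
  if h : l < n then e ⟨l, h⟩ else 0

theorem eext_eq {B M : Type} [CommRing B] [AddCommGroup M] [Module B M] {n : ℕ}
    (e : Module.Basis (Fin n) B M) (l : ℕ) (h : l < n) : eext e l = e ⟨l, h⟩ := dif_pos h

/-- The Katz sums. -/
def Kv {M : Type} [AddCommGroup M] (nab : M → M) (f : ℕ → M) (i j : ℕ) : M :=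
  ∑ k ∈ Finset.range (j + 1),
    ((-1 : ℤ) ^ k * (j.choose k : ℤ)) • nab^[k] (f (i + j - k))

theorem Kv_step {M : Type} [AddCommGroup M] (nab : M → M)
    (hadd : ∀ x y, nab (x + y) = nab x + nab y) (f : ℕ → M) (i j : ℕ) :
    nab (Kv nab f i j) + Kv nab f i (j + 1) = Kv nab f (i + 1) j := by
  classical
  set N : M →+ M := AddMonoidHom.mk' nab hadd with hN
  have hnab : ∀ x, nab x = N x := fun x => rfl
  have h1 : nab (Kv nab f i j)
      = ∑ k ∈ Finset.range (j + 1),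
          ((-1 : ℤ) ^ k * (j.choose k : ℤ)) • nab^[k + 1] (f (i + j - k)) := by
    rw [hnab, Kv, map_sum]
    refine Finset.sum_congr rfl fun k _ => ?_
    rw [map_zsmul, Function.iterate_succ_apply']
    rfl
  -- pack the first sum as a sum over `range (j+2)`
  set g : ℕ → M := fun k =>
    match k with
    | 0 => 0
    | (m + 1) => ((-1 : ℤ) ^ m * (j.choose m : ℤ)) • nab^[m + 1] (f (i + j - m)) with hg
  have h2 : nab (Kv nab f i j) = ∑ k ∈ Finset.range (j + 2), g k := by
    rw [Finset.sum_range_succ' g, h1]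
    simp [hg]
  have h3 : Kv nab f (i + 1) j
      = ∑ k ∈ Finset.range (j + 2),
          ((-1 : ℤ) ^ k * (j.choose k : ℤ)) • nab^[k] (f (i + 1 + j - k)) := by
    rw [Finset.sum_range_succ, Kv]
    simp [Nat.choose_succ_self]
  rw [h2, h3, Kv, ← Finset.sum_add_distrib]
  refine Finset.sum_congr rfl fun k hk => ?_
  match k with
  | 0 =>
    simp only [hg, zero_add, pow_zero, Nat.choose_zero_right, Nat.cast_one, one_mul,
      Function.iterate_zero, id_eq, one_smul]
    rw [show i + (j + 1) - 0 = i + 1 + j - 0 by omega]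
  | (m + 1) =>
    have he1 : i + j - m = i + (j + 1) - (m + 1) := by omega
    have he2 : i + j - m = i + 1 + j - (m + 1) := by omega
    show ((-1 : ℤ) ^ m * (j.choose m : ℤ)) • nab^[m + 1] (f (i + j - m)) + _ = _
    rw [← he1, ← he2, ← add_smul]
    congr 1
    rw [Nat.choose_succ_succ]
    push_cast
    ring

/-- For the Katz vector `c(e,X) = Σ_{j<n} (X^j/j!) Σ_{k≤j} (−1)^k C(j,k) ∇^k(e_{j−k})`
(coefficients `c 0 j`, with rows `c i` the coefficients of `∇^i(c(e,X))` via the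
recursion), the base change matrix at `X = 0` is the identity; in particular
`P(0) = det H(0) = 1`. -/
theorem stmt7 (B M : Type) [CommRing B] [AddCommGroup M] [Module B M]
    (n : ℕ) (e : Module.Basis (Fin n) B M) (hinv : IsUnit ((Nat.factorial (n - 1) : B)))
    (d : B → B)
    (hd_add : ∀ x y, d (x + y) = d x + d y)
    (hd_mul : ∀ x y, d (x * y) = x * d y + d x * y)
    (nab : M → M) (hadd : ∀ x y, nab (x + y) = nab x + nab y)
    (hL : ∀ (b : B) (m : M), nab (b • m) = d b • m + b • nab m)
    (c : ℕ → ℕ → M)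
    (hrec : ∀ i j, c (i + 1) j = nab (c i j) + (j + 1) • c i (j + 1))
    (hc0 : ∀ j, c 0 j =
      if hj : j < n then
        Ring.inverse ((Nat.factorial j : B)) •
          ∑ k ∈ (Finset.range (j + 1)).attach,
            ((-1 : ℤ) ^ (k : ℕ) * (j.choose k : ℤ)) •
              nab^[(k : ℕ)] (e ⟨j - (k : ℕ), by
                have hk := Finset.mem_range.mp k.2; omega⟩)
      else 0) :
    (Matrix.of fun i j : Fin n => e.repr (c (i : ℕ) 0) j) = 1 ∧
    (Matrix.of fun i j : Fin n => e.repr (c (i : ℕ) 0) j).det = 1 := by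
  classical
  -- d kills 1 and naturals
  have hd1 : d 1 = 0 := by
    have h := hd_mul 1 1
    simp only [one_mul, mul_one] at h
    exact right_eq_add.mp h
  have hdnat : ∀ m : ℕ, d ((m : ℕ) : B) = 0 := by
    intro m
    induction m with
    | zero =>
      have h := hd_add 0 0
      simp only [add_zero] at h
      have h2 : d (0 : B) = d 0 + d 0 := by simpa using h
      simpa using right_eq_add.mp h2
    | succ m ih =>
      push_cast
      rw [hd_add, ih, hd1, add_zero]
  have hdinv : ∀ r : B, IsUnit r → d r = 0 → d (Ring.inverse r) = 0 := by
    intro r hr hdr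
    have h1 : r * Ring.inverse r = 1 := Ring.mul_inverse_cancel r hr
    have h2 : r * d (Ring.inverse r) = 0 := by
      have := congrArg d h1
      rw [hd_mul, hdr, hd1, zero_mul, add_zero] at this
      exact this
    calc d (Ring.inverse r) = Ring.inverse r * r * d (Ring.inverse r) := by
          rw [Ring.inverse_mul_cancel r hr, one_mul]
      _ = Ring.inverse r * (r * d (Ring.inverse r)) := mul_assoc _ _ _
      _ = 0 := by rw [h2, mul_zero]
  have hnab0 : ∀ (r : B), d r = 0 → ∀ m : M, nab (r • m) = r • nab m := by
    intro r hr m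
    rw [hL, hr, zero_smul, zero_add]
  -- units
  have hfac : ∀ m : ℕ, m ≤ n - 1 → IsUnit ((m.factorial : B)) := by
    intro m hm
    exact isUnit_of_dvd_unit (Nat.cast_dvd_cast (Nat.factorial_dvd_factorial hm)) hinv
  have hsucc : ∀ j : ℕ, j + 1 ≤ n - 1 → IsUnit (((j + 1 : ℕ) : B)) := by
    intro j hj
    exact isUnit_of_dvd_unit (Nat.cast_dvd_cast (Nat.dvd_factorial (Nat.succ_pos j) hj)) hinv
  -- main invariant
  have key : ∀ i j : ℕ, i + j < n →
      c i j = Ring.inverse ((j.factorial : B)) • Kv nab (eext e) i j := by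
    intro i
    induction i with
    | zero =>
      intro j hj
      rw [hc0 j, dif_pos (by omega : j < n)]
      congr 1
      rw [Kv]
      simp only [Nat.zero_add]
      rw [← Finset.sum_attach (Finset.range (j + 1))
        (fun k => ((-1 : ℤ) ^ k * (j.choose k : ℤ)) • nab^[k] (eext e (j - k)))]
      refine Finset.sum_congr rfl fun k _ => ?_
      have hk := Finset.mem_range.mp k.2
      rw [eext_eq e (j - (k : ℕ)) (by omega)]
    | succ i ih =>
      intro j hj
      rw [hrec i j, ih j (by omega), ih (j + 1) (by omega)]
      have hdj : d ((j.factorial : B)) = 0 := hdnat _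
      have huj : IsUnit ((j.factorial : B)) := hfac j (by omega)
      have hujs : IsUnit (((j + 1 : ℕ) : B)) := hsucc j (by omega)
      rw [hnab0 _ (hdinv _ huj hdj)]
      have hns : (j + 1) • (Ring.inverse (((j + 1).factorial : B)) • Kv nab (eext e) i (j + 1))
          = Ring.inverse ((j.factorial : B)) • Kv nab (eext e) i (j + 1) := by
        rw [← Nat.cast_smul_eq_nsmul B (j + 1), smul_smul]
        congr 1
        have hf : (((j + 1).factorial : ℕ) : B) = ((j + 1 : ℕ) : B) * ((j.factorial : ℕ) : B) := by
          rw [Nat.factorial_succ]; push_cast; ring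
        rw [hf, Ring.mul_inverse_rev, mul_comm (Ring.inverse ((j.factorial : B))),
          ← mul_assoc, Ring.mul_inverse_cancel _ hujs, one_mul]
      rw [hns, ← smul_add, Kv_step nab hadd]
  -- c i 0 = e i
  have hc : ∀ i : Fin n, c (i : ℕ) 0 = e i := by
    intro i
    rw [key (i : ℕ) 0 (by omega)]
    simp only [Kv, Nat.factorial_zero, Nat.cast_one, Ring.inverse_one, one_smul,
      zero_add, Finset.range_one, Finset.sum_singleton, pow_zero, Nat.choose_self,
      one_mul, Function.iterate_zero, id_eq, Nat.add_zero, Nat.sub_zero]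
    rw [eext_eq e (i : ℕ) i.2]
  have hmat : (Matrix.of fun i j : Fin n => e.repr (c (i : ℕ) 0) j) = 1 := by
    ext i j
    rw [Matrix.of_apply, hc i, Module.Basis.repr_self, Matrix.one_apply, Finsupp.single_apply]
  exact ⟨hmat, by rw [hmat, Matrix.det_one]⟩
end

section
/- Let B be a local ring in which (n−1)! is invertible, d a derivation on B, t ∈ B with d(t) = 1, and a ∈ B a constant (d(a) = 0) such that t − a lies in the maximal ideal of B. Then for any rank-n differential module (M, ∇) with basis e, the Katz vector c(e, t−a) = Σ_{j=0}^{n-1} ((t−a)^j / j!) Σ_{k=0}^{j} (−1)^k C(j,k) ∇^k(e_{j−k}) is a cyclic vector for M. -/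
section KatzAux
variable {B M : Type} [CommRing B] [AddCommGroup M] [Module B M]
variable (d : B → B) (nab : M → M)

lemma kd_zero (hd_add : ∀ x y, d (x + y) = d x + d y) : d 0 = 0 := by
  have h := hd_add 0 0
  rw [add_zero] at h
  exact (left_eq_add.mp h)

lemma kd_one (hd_mul : ∀ x y, d (x * y) = x * d y + d x * y) : d 1 = 0 := by
  have h := hd_mul 1 1
  rw [mul_one, one_mul, mul_one] at h
  exact (left_eq_add.mp h)

lemma kd_neg (hd_add : ∀ x y, d (x + y) = d x + d y) (x : B) : d (-x) = - d x := by
  have h := hd_add x (-x)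
  rw [add_neg_cancel, kd_zero d hd_add] at h
  exact eq_neg_of_add_eq_zero_right h.symm

lemma kd_nat (hd_add : ∀ x y, d (x + y) = d x + d y)
    (hd_mul : ∀ x y, d (x * y) = x * d y + d x * y) (k : ℕ) : d (k : B) = 0 := by
  induction k with
  | zero => simpa using kd_zero d hd_add
  | succ k ih => push_cast; rw [hd_add, ih, kd_one d hd_mul, add_zero]

lemma kd_inverse (hd_add : ∀ x y, d (x + y) = d x + d y)
    (hd_mul : ∀ x y, d (x * y) = x * d y + d x * y) (c : B) (hc : d c = 0) :
    d (Ring.inverse c) = 0 := by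
  by_cases h : IsUnit c
  · have h1 : c * Ring.inverse c = 1 := Ring.mul_inverse_cancel c h
    have h2 := congrArg d h1
    rw [hd_mul, hc, zero_mul, add_zero, kd_one d hd_mul] at h2
    have h3 := congrArg (fun x => Ring.inverse c * x) h2
    simp only [mul_zero, ← mul_assoc] at h3
    rwa [Ring.inverse_mul_cancel c h, one_mul] at h3
  · rw [Ring.inverse_non_unit c h]; exact kd_zero d hd_add
end KatzAux

section KatzAux2
variable {B M : Type} [CommRing B] [AddCommGroup M] [Module B M]
variable (d : B → B) (nab : M → M)

lemma k_iter_add (hadd : ∀ x y, nab (x + y) = nab x + nab y) (k : ℕ) :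
    ∀ x y, nab^[k] (x + y) = nab^[k] x + nab^[k] y := by
  induction k with
  | zero => intro x y; simp
  | succ k ih =>
      intro x y
      rw [Function.iterate_succ_apply', Function.iterate_succ_apply',
        Function.iterate_succ_apply', ih, hadd]

/-- `nab^[k]` as an additive monoid hom. -/
noncomputable def kIter (hadd : ∀ x y, nab (x + y) = nab x + nab y) (k : ℕ) : M →+ M :=
  AddMonoidHom.mk' (nab^[k]) (k_iter_add nab hadd k)

lemma kIter_apply (hadd : ∀ x y, nab (x + y) = nab x + nab y) (k : ℕ) (x : M) :
    kIter nab hadd k x = nab^[k] x := rfl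

lemma k_iter_zsmul (hadd : ∀ x y, nab (x + y) = nab x + nab y) (k : ℕ) (z : ℤ) (x : M) :
    nab^[k] (z • x) = z • nab^[k] x := by
  rw [← kIter_apply nab hadd, map_zsmul, kIter_apply]

lemma k_iter_sum (hadd : ∀ x y, nab (x + y) = nab x + nab y) (k : ℕ)
    {ι : Type*} (s : Finset ι) (f : ι → M) :
    nab^[k] (∑ i ∈ s, f i) = ∑ i ∈ s, nab^[k] (f i) := by
  rw [← kIter_apply nab hadd, map_sum]; rfl

lemma k_sum (hadd : ∀ x y, nab (x + y) = nab x + nab y)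
    {ι : Type*} (s : Finset ι) (f : ι → M) :
    nab (∑ i ∈ s, f i) = ∑ i ∈ s, nab (f i) := by
  simpa using k_iter_sum nab hadd 1 s f

lemma k_nsmul (hadd : ∀ x y, nab (x + y) = nab x + nab y) (c : ℕ) (x : M) :
    nab (c • x) = c • nab x := by
  simpa using k_iter_zsmul nab hadd 1 (c : ℤ) x

/-- Binomial Leibniz rule for iterates of a connection. -/
lemma k_iter_leibniz (hadd : ∀ x y, nab (x + y) = nab x + nab y)
    (hL : ∀ (b : B) (m : M), nab (b • m) = d b • m + b • nab m)
    (i : ℕ) (b : B) (m : M) :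
    nab^[i] (b • m) =
      ∑ s ∈ Finset.range (i + 1), i.choose s • (d^[s] b • nab^[i - s] m) := by
  induction i with
  | zero => simp
  | succ i ih =>
      rw [Function.iterate_succ_apply', ih, k_sum nab hadd]
      have step : ∀ s ∈ Finset.range (i + 1),
          nab (i.choose s • (d^[s] b • nab^[i - s] m)) =
            i.choose s • (d^[s+1] b • nab^[(i+1) - (s+1)] m)
              + i.choose s • (d^[s] b • nab^[(i+1) - s] m) := by
        intro s hs
        rw [Finset.mem_range] at hs
        have h1 : (i+1) - (s+1) = i - s := by omega
        have h2 : (i+1) - s = (i - s) + 1 := by omega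
        rw [h1, h2, Function.iterate_succ_apply' nab,
          Function.iterate_succ_apply' d, k_nsmul nab hadd, hL, smul_add]
      rw [Finset.sum_congr rfl step, Finset.sum_add_distrib]
      have e2 : ∑ s ∈ Finset.range (i + 1), i.choose s • (d^[s] b • nab^[(i+1) - s] m)
          = (∑ s ∈ Finset.range (i + 1), i.choose (s+1) • (d^[s+1] b • nab^[(i+1)-(s+1)] m))
            + i.choose 0 • (d^[0] b • nab^[(i+1) - 0] m) := by
        have h := Finset.sum_range_succ'
          (fun s => i.choose s • (d^[s] b • nab^[(i+1) - s] m)) (i+1)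
        rw [Finset.sum_range_succ
          (fun s => i.choose s • (d^[s] b • nab^[(i+1) - s] m)) (i+1)] at h
        simp only [Nat.choose_succ_self, zero_smul, add_zero] at h
        exact h
      rw [e2,
        Finset.sum_range_succ' (fun s => (i+1).choose s • (d^[s] b • nab^[(i+1) - s] m)) (i+1)]
      simp only [Nat.choose_succ_succ, add_smul, Nat.choose_zero_right]
      rw [Finset.sum_add_distrib]
      abel

end KatzAux2

noncomputable section KatzAux3
variable {B M : Type} [CommRing B] [AddCommGroup M] [Module B M]

/-- The scalar `u^j / j!`. -/
def katzW (u : B) (j : ℕ) : B := u ^ j * Ring.inverse ((j.factorial : B))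

/-- The auxiliary vectors `c_j`. -/
def katzC (E : ℕ → M) (nab : M → M) (j : ℕ) : M :=
  ∑ k ∈ Finset.range (j + 1), ((-1 : ℤ) ^ k * (j.choose k : ℤ)) • nab^[k] (E (j - k))

lemma katz_fact_unit {n j : ℕ} (hinv : IsUnit ((n.factorial : B))) (hj : j ≤ n) :
    IsUnit ((j.factorial : B)) := by
  refine isUnit_of_dvd_unit ?_ hinv
  exact_mod_cast Nat.cast_dvd_cast (α := B) (Nat.factorial_dvd_factorial hj)

lemma katzW_zero (u : B) : katzW u 0 = 1 := by
  simp [katzW]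

variable (d : B → B)

lemma kd_pow (hd_mul : ∀ x y, d (x * y) = x * d y + d x * y)
    (u : B) (hu : d u = 1) : ∀ j : ℕ, d (u ^ (j + 1)) = (j + 1 : ℕ) * u ^ j := by
  intro j
  induction j with
  | zero => simpa using hu
  | succ j ih =>
      have : u ^ (j + 2) = u * u ^ (j + 1) := by ring
      rw [this, hd_mul, ih, hu]
      push_cast
      ring

lemma kd_W_succ (hd_add : ∀ x y, d (x + y) = d x + d y)
    (hd_mul : ∀ x y, d (x * y) = x * d y + d x * y)
    (u : B) (hu : d u = 1) (j : ℕ) (hunit : IsUnit (((j + 1).factorial : B))) :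
    d (katzW u (j + 1)) = katzW u j := by
  have hf : (((j + 1).factorial : ℕ) : B) = ((j + 1 : ℕ) : B) * ((j.factorial : ℕ) : B) := by
    rw [Nat.factorial_succ]; push_cast; ring
  have hu1 : IsUnit (((j + 1 : ℕ) : B)) := by
    refine isUnit_of_mul_isUnit_left (y := ((j.factorial : ℕ) : B)) ?_
    rwa [← hf]
  have hu2 : IsUnit ((j.factorial : B)) := by
    refine isUnit_of_mul_isUnit_right (x := ((j + 1 : ℕ) : B)) ?_
    rwa [← hf]
  rw [katzW, hd_mul, kd_inverse d hd_add hd_mul _ (kd_nat d hd_add hd_mul _),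
    kd_pow d hd_mul u hu, mul_zero, zero_add, hf, Ring.mul_inverse_rev]
  rw [katzW]
  have : ((j + 1 : ℕ) : B) * u ^ j * (Ring.inverse ((j.factorial : B)) *
      Ring.inverse (((j + 1 : ℕ) : B))) =
      (((j + 1 : ℕ) : B) * Ring.inverse (((j + 1 : ℕ) : B))) *
        (u ^ j * Ring.inverse ((j.factorial : B))) := by ring
  rw [this, Ring.mul_inverse_cancel _ hu1, one_mul]

lemma kd_iter_W {n : ℕ} (hinv : IsUnit ((n.factorial : B)))
    (hd_add : ∀ x y, d (x + y) = d x + d y)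
    (hd_mul : ∀ x y, d (x * y) = x * d y + d x * y)
    (u : B) (hu : d u = 1) {j : ℕ} (hj : j ≤ n) (s : ℕ) :
    d^[s] (katzW u j) = if s ≤ j then katzW u (j - s) else 0 := by
  induction s with
  | zero => simp
  | succ s ih =>
      rw [Function.iterate_succ_apply', ih]
      by_cases h1 : s + 1 ≤ j
      · have h2 : s ≤ j := by omega
        have h3 : j - s = (j - (s + 1)) + 1 := by omega
        rw [if_pos h2, if_pos h1, h3]
        exact kd_W_succ d hd_add hd_mul u hu _
          (katz_fact_unit hinv (by omega))
      · rw [if_neg h1]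
        by_cases h2 : s ≤ j
        · have h3 : j - s = 0 := by omega
          rw [if_pos h2, h3, katzW_zero]
          exact kd_one d hd_mul
        · rw [if_neg h2]
          exact kd_zero d hd_add

end KatzAux3

section KatzAux4
variable {B M : Type} [CommRing B] [AddCommGroup M] [Module B M]
variable (nab : M → M)

lemma katz_alt_sum (i l : ℕ) (hl : l ≤ i) :
    (∑ j ∈ Finset.range (i + 1),
      if l ≤ j then ((-1 : ℤ) ^ (j - l) * (i.choose j : ℤ) * (j.choose l : ℤ)) else 0)
      = if l = i then 1 else 0 := by
  -- restrict to Ico l (i+1)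
  have h1 : (∑ j ∈ Finset.range (i + 1),
      if l ≤ j then ((-1 : ℤ) ^ (j - l) * (i.choose j : ℤ) * (j.choose l : ℤ)) else 0)
      = ∑ j ∈ Finset.Ico l (i + 1),
        ((-1 : ℤ) ^ (j - l) * (i.choose j : ℤ) * (j.choose l : ℤ)) := by
    rw [Finset.range_eq_Ico, ← Finset.sum_Ico_consecutive _ (Nat.zero_le l) (by omega)]
    have h2 : ∑ j ∈ Finset.Ico 0 l,
        (if l ≤ j then ((-1 : ℤ) ^ (j - l) * (i.choose j : ℤ) * (j.choose l : ℤ)) else 0) = 0 := by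
      apply Finset.sum_eq_zero
      intro j hj
      rw [Finset.mem_Ico] at hj
      rw [if_neg (by omega)]
    rw [h2, zero_add]
    apply Finset.sum_congr rfl
    intro j hj
    rw [Finset.mem_Ico] at hj
    rw [if_pos hj.1]
  rw [h1, Finset.sum_Ico_eq_sum_range]
  have h3 : ∀ p ∈ Finset.range (i + 1 - l),
      ((-1 : ℤ) ^ ((l + p) - l) * (i.choose (l + p) : ℤ) * ((l + p).choose l : ℤ))
        = (i.choose l : ℤ) * ((-1 : ℤ) ^ p * ((i - l).choose p : ℤ)) := by
    intro p hp
    rw [Finset.mem_range] at hp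
    have hle : l + p ≤ i := by omega
    have hmul := Nat.choose_mul (n := i) (k := l + p) (s := l) (Nat.le_add_right l p)
    have hsub : (l + p) - l = p := by omega
    rw [hsub]
    have : (i.choose (l + p) : ℤ) * ((l + p).choose l : ℤ)
        = (i.choose l : ℤ) * ((i - l).choose p : ℤ) := by
      rw [← Nat.cast_mul, ← Nat.cast_mul, hmul, hsub]
    push_cast at this ⊢
    linear_combination ((-1 : ℤ) ^ p) * this
  rw [Finset.sum_congr rfl h3, ← Finset.mul_sum]
  have h4 : i + 1 - l = (i - l) + 1 := by omega
  rw [h4, Int.alternating_sum_range_choose]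
  by_cases h : l = i
  · subst h; simp
  · rw [if_neg (by omega : ¬ i - l = 0), if_neg h, mul_zero]

/-- The key exact identity: `∑_{j ≤ i} C(i,j) ∇^{i-j} c_j = E i`. -/
lemma katz_identity (hadd : ∀ x y, nab (x + y) = nab x + nab y)
    (E : ℕ → M) (i : ℕ) :
    ∑ j ∈ Finset.range (i + 1), i.choose j • nab^[i - j] (katzC E nab j) = E i := by
  -- Step 1: expand katzC and push the iterate inside
  have step1 : ∀ j ∈ Finset.range (i + 1),
      i.choose j • nab^[i - j] (katzC E nab j)
        = ∑ k ∈ Finset.range (j + 1),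
            ((i.choose j : ℤ) * ((-1 : ℤ) ^ k * (j.choose k : ℤ))) •
              nab^[(i - j) + k] (E (j - k)) := by
    intro j hj
    rw [katzC, k_iter_sum nab hadd, Finset.smul_sum]
    apply Finset.sum_congr rfl
    intro k hk
    rw [k_iter_zsmul nab hadd, ← Function.iterate_add_apply,
      ← natCast_zsmul, smul_smul]
  rw [Finset.sum_congr rfl step1]
  -- Step 2: reflect the inner sum (k ↦ j - k)
  have step2 : ∀ j ∈ Finset.range (i + 1),
      (∑ k ∈ Finset.range (j + 1),
          ((i.choose j : ℤ) * ((-1 : ℤ) ^ k * (j.choose k : ℤ))) •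
            nab^[(i - j) + k] (E (j - k)))
        = ∑ l ∈ Finset.range (i + 1),
            (if l ≤ j then ((-1 : ℤ) ^ (j - l) * (i.choose j : ℤ) * (j.choose l : ℤ)) else 0) •
              nab^[i - l] (E l) := by
    intro j hj
    rw [Finset.mem_range] at hj
    rw [← Finset.sum_range_reflect]
    -- now summand index k, value at (j + 1 - 1 - k) = j - k
    have e1 : ∀ l ∈ Finset.range (j + 1),
        ((i.choose j : ℤ) * ((-1 : ℤ) ^ (j + 1 - 1 - l) * ((j.choose (j + 1 - 1 - l)) : ℤ))) •
            nab^[(i - j) + (j + 1 - 1 - l)] (E (j - (j + 1 - 1 - l)))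
          = ((-1 : ℤ) ^ (j - l) * (i.choose j : ℤ) * (j.choose l : ℤ)) • nab^[i - l] (E l) := by
      intro l hl
      rw [Finset.mem_range] at hl
      have hl' : l ≤ j := by omega
      have e2 : j + 1 - 1 - l = j - l := by omega
      have e3 : j - (j - l) = l := by omega
      have e4 : (i - j) + (j - l) = i - l := by omega
      have e5 : j.choose (j - l) = j.choose l := Nat.choose_symm hl'
      rw [e2, e3, e4, e5]
      ring_nf
    rw [Finset.sum_congr rfl e1]
    -- extend to range (i+1)
    have hsub : Finset.range (j + 1) ⊆ Finset.range (i + 1) := by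
      intro x hx
      rw [Finset.mem_range] at *
      omega
    rw [← Finset.sum_subset hsub (fun x hx hnx => by
      rw [Finset.mem_range] at hnx
      rw [if_neg (by omega), zero_smul])]
    apply Finset.sum_congr rfl
    intro l hl
    rw [Finset.mem_range] at hl
    rw [if_pos (by omega)]
  rw [Finset.sum_congr rfl step2, Finset.sum_comm]
  have step3 : ∀ l ∈ Finset.range (i + 1),
      (∑ j ∈ Finset.range (i + 1),
        (if l ≤ j then ((-1 : ℤ) ^ (j - l) * (i.choose j : ℤ) * (j.choose l : ℤ)) else 0) •
          nab^[i - l] (E l))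
        = if l = i then nab^[i - l] (E l) else 0 := by
    intro l hl
    rw [Finset.mem_range] at hl
    rw [← Finset.sum_smul, katz_alt_sum i l (by omega)]
    split <;> simp
  rw [Finset.sum_congr rfl step3,
    Finset.sum_ite_eq' (Finset.range (i + 1)) i (fun l => nab^[i - l] (E l)),
    if_pos (Finset.self_mem_range_succ i)]
  simp
end KatzAux4

section KatzMain
variable {B M : Type} [CommRing B] [AddCommGroup M] [Module B M]

lemma katz_repr_mem {m : ℕ} (e : Module.Basis (Fin m) B M) (I : Ideal B) {x : M}
    (hx : x ∈ I • (⊤ : Submodule B M)) (i : Fin m) : e.repr x i ∈ I := by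
  refine Submodule.smul_induction_on hx ?_ ?_
  · intro r hr y _
    rw [map_smul, Finsupp.smul_apply, smul_eq_mul]
    exact I.mul_mem_right _ hr
  · intro y z hy hz
    rw [map_add, Finsupp.add_apply]
    exact I.add_mem hy hz

variable [IsLocalRing B]

lemma katz_iter_sub_mem
    (n : ℕ) (hinv : IsUnit ((n.factorial : B)))
    (d : B → B) (hd_add : ∀ x y, d (x + y) = d x + d y)
    (hd_mul : ∀ x y, d (x * y) = x * d y + d x * y)
    (u : B) (hu : d u = 1) (hum : u ∈ IsLocalRing.maximalIdeal B)
    (E : ℕ → M) (nab : M → M)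
    (hadd : ∀ x y, nab (x + y) = nab x + nab y)
    (hL : ∀ (b : B) (m : M), nab (b • m) = d b • m + b • nab m)
    (i : ℕ) (hi : i ≤ n) :
    nab^[i] (∑ j ∈ Finset.range (n + 1), katzW u j • katzC E nab j) - E i
      ∈ (IsLocalRing.maximalIdeal B) • (⊤ : Submodule B M) := by
  have expand : nab^[i] (∑ j ∈ Finset.range (n + 1), katzW u j • katzC E nab j)
      = ∑ j ∈ Finset.range (n + 1), ∑ s ∈ Finset.range (i + 1),
          i.choose s • (d^[s] (katzW u j) • nab^[i - s] (katzC E nab j)) := by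
    rw [k_iter_sum nab hadd]
    exact Finset.sum_congr rfl fun j hj => k_iter_leibniz d nab hadd hL i _ _
  have hD : (∑ j ∈ Finset.range (n + 1), ∑ s ∈ Finset.range (i + 1),
      if s = j then i.choose s • nab^[i - s] (katzC E nab j) else 0) = E i := by
    have h1 : ∀ j ∈ Finset.range (n + 1),
        (∑ s ∈ Finset.range (i + 1),
          if s = j then i.choose s • nab^[i - s] (katzC E nab j) else 0)
          = if j ∈ Finset.range (i + 1) then i.choose j • nab^[i - j] (katzC E nab j) else 0 :=
      fun j _ => Finset.sum_ite_eq' (Finset.range (i + 1)) j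
        (fun s => i.choose s • nab^[i - s] (katzC E nab j))
    rw [Finset.sum_congr rfl h1, Finset.sum_ite_mem,
      Finset.inter_eq_right.mpr (by intro x hx; rw [Finset.mem_range] at *; omega)]
    exact katz_identity nab hadd E i
  rw [expand, ← hD, ← Finset.sum_sub_distrib]
  apply Submodule.sum_mem
  intro j hj
  rw [← Finset.sum_sub_distrib]
  apply Submodule.sum_mem
  intro s hs
  rw [Finset.mem_range] at hj hs
  rw [kd_iter_W d hinv hd_add hd_mul u hu (by omega : j ≤ n) s]
  by_cases hsj : s = j
  · subst hsj
    rw [if_pos le_rfl, Nat.sub_self, katzW_zero, one_smul, if_pos rfl, sub_self]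
    exact Submodule.zero_mem _
  · rw [if_neg hsj, sub_zero]
    by_cases hsl : s ≤ j
    · rw [if_pos hsl]
      have hWm : katzW u (j - s) ∈ IsLocalRing.maximalIdeal B := by
        have h1 : j - s = (j - s - 1) + 1 := by omega
        rw [katzW, h1, pow_succ]
        exact Ideal.mul_mem_right _ _ (Ideal.mul_mem_left _ _ hum)
      have h2 : i.choose s • (katzW u (j - s) • nab^[i - s] (katzC E nab j))
          = ((i.choose s : B) * katzW u (j - s)) • nab^[i - s] (katzC E nab j) := by
        rw [← smul_smul, Nat.cast_smul_eq_nsmul]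
      rw [h2]
      exact Submodule.smul_mem_smul (Ideal.mul_mem_left _ _ hWm) Submodule.mem_top
    · rw [if_neg hsl, zero_smul, smul_zero]
      exact Submodule.zero_mem _

theorem katz_main (n : ℕ) (hinv : IsUnit ((n.factorial : B)))
    (d : B → B) (hd_add : ∀ x y, d (x + y) = d x + d y)
    (hd_mul : ∀ x y, d (x * y) = x * d y + d x * y)
    (u : B) (hu : d u = 1) (hum : u ∈ IsLocalRing.maximalIdeal B)
    (e : Module.Basis (Fin (n + 1)) B M) (nab : M → M)
    (hadd : ∀ x y, nab (x + y) = nab x + nab y)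
    (hL : ∀ (b : B) (m : M), nab (b • m) = d b • m + b • nab m) :
    ∃ b : Module.Basis (Fin (n + 1)) B M, ∀ i : Fin (n + 1),
      b i = nab^[(i : ℕ)] (∑ j ∈ Finset.range (n + 1), katzW u j •
        katzC (fun l => if h : l < n + 1 then e ⟨l, h⟩ else 0) nab j) := by
  set E : ℕ → M := fun l => if h : l < n + 1 then e ⟨l, h⟩ else 0 with hE
  set v : Fin (n + 1) → M := fun i =>
    nab^[(i : ℕ)] (∑ j ∈ Finset.range (n + 1), katzW u j • katzC E nab j) with hv
  have hvj : ∀ i : Fin (n + 1),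
      v i - e i ∈ (IsLocalRing.maximalIdeal B) • (⊤ : Submodule B M) := by
    intro i
    have h := katz_iter_sub_mem n hinv d hd_add hd_mul u hu hum E nab hadd hL
      (i : ℕ) (by omega)
    have hEi : E (i : ℕ) = e i := by
      rw [hE]
      simp only [dif_pos i.isLt]
    rwa [hEi] at h
  have hrepr : ∀ i j : Fin (n + 1),
      e.repr (v j) i - (if j = i then 1 else 0) ∈ IsLocalRing.maximalIdeal B := by
    intro i j
    have h := katz_repr_mem e _ (hvj j) i
    rw [map_sub, Finsupp.sub_apply, e.repr_self, Finsupp.single_apply] at h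
    exact h
  have hdet : IsUnit (e.det v) := by
    rw [Module.Basis.det_apply]
    set φ := IsLocalRing.residue B
    have h1 : (e.toMatrix v).map φ = 1 := by
      ext i j
      rw [Matrix.map_apply, Module.Basis.toMatrix_apply]
      have h2 : φ (e.repr (v j) i - (if j = i then 1 else 0)) = 0 :=
        (IsLocalRing.residue_eq_zero_iff _).mpr (hrepr i j)
      rw [map_sub, sub_eq_zero] at h2
      rw [h2, apply_ite φ, map_one, map_zero, Matrix.one_apply]
      simp [eq_comm]
    by_contra hns
    have hmem : (e.toMatrix v).det ∈ IsLocalRing.maximalIdeal B :=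
      (IsLocalRing.mem_maximalIdeal _).mpr (mem_nonunits_iff.mpr hns)
    have h3 : φ ((e.toMatrix v).det) = 1 := by
      rw [RingHom.map_det, RingHom.mapMatrix_apply, h1, Matrix.det_one]
    rw [(IsLocalRing.residue_eq_zero_iff _).mpr hmem] at h3
    exact zero_ne_one h3
  obtain ⟨hli, hsp⟩ := (Module.Basis.is_basis_iff_det e).mpr hdet
  exact ⟨Module.Basis.mk hli hsp.ge, fun i => by rw [Module.Basis.mk_apply]⟩

end KatzMain

/-- Katz's theorem over a local ring: if `(n−1)!` is invertible, `d(t) = 1`, `d(a) = 0`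
and `t − a` lies in the maximal ideal, then the Katz vector `c(e, t−a)` is a cyclic
vector for any rank-`n` differential module `(M, ∇)` with basis `e`. -/
theorem stmt9 (B M : Type) [CommRing B] [IsLocalRing B] [AddCommGroup M] [Module B M]
    (n : ℕ) (hinv : IsUnit ((Nat.factorial (n - 1) : B)))
    (d : B → B)
    (hd_add : ∀ x y, d (x + y) = d x + d y)
    (hd_mul : ∀ x y, d (x * y) = x * d y + d x * y)
    (t a : B) (ht : d t = 1) (ha : d a = 0)
    (hta : t - a ∈ IsLocalRing.maximalIdeal B)
    (e : Module.Basis (Fin n) B M)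
    (nab : M → M) (hadd : ∀ x y, nab (x + y) = nab x + nab y)
    (hL : ∀ (b : B) (m : M), nab (b • m) = d b • m + b • nab m) :
    ∃ b : Module.Basis (Fin n) B M, ∀ i : Fin n,
      b i = nab^[(i : ℕ)]
        (∑ j : Fin n, ((t - a) ^ (j : ℕ) * Ring.inverse ((Nat.factorial (j : ℕ) : B))) •
          ∑ k ∈ (Finset.range ((j : ℕ) + 1)).attach,
            ((-1 : ℤ) ^ (k : ℕ) * ((j : ℕ).choose k : ℤ)) •
              nab^[(k : ℕ)] (e ⟨(j : ℕ) - (k : ℕ), by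
                have hk := Finset.mem_range.mp k.2; have hj := j.isLt; omega⟩)) := by
  obtain _ | n := n
  · exact ⟨e, fun i => i.elim0⟩
  · have hu : d (t - a) = 1 := by
      rw [sub_eq_add_neg, hd_add, kd_neg d hd_add, ha, ht, neg_zero, add_zero]
    have hinv' : IsUnit ((n.factorial : B)) := by simpa using hinv
    obtain ⟨b, hb⟩ := katz_main n hinv' d hd_add hd_mul (t - a) hu hta e nab hadd hL
    refine ⟨b, fun i => ?_⟩
    rw [hb i]
    congr 1
    rw [← Fin.sum_univ_eq_sum_range (fun l => katzW (t - a) l •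
      katzC (fun l' => if h : l' < n + 1 then e ⟨l', h⟩ else 0) nab l) (n + 1)]
    apply Finset.sum_congr rfl
    intro j _
    rw [katzW, katzC]
    congr 1
    rw [← Finset.sum_attach (Finset.range ((j : ℕ) + 1)) (fun k =>
      ((-1 : ℤ) ^ k * (((j : ℕ).choose k : ℤ))) • nab^[k]
        ((fun l' => if h : l' < n + 1 then e ⟨l', h⟩ else 0) ((j : ℕ) - k)))]
    apply Finset.sum_congr rfl
    intro k _
    simp only []
    rw [dif_pos (show (j : ℕ) - (k : ℕ) < n + 1 by omega)]
end

section
/- Let B be a field of characteristic 0 with a nontrivial derivation d. Then every differential module (M, ∇) over (B, d) of finite rank admits a cyclic vector. -/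
set_option maxHeartbeats 1000000

open Polynomial Finset

lemma cyclic_prod_fac {B : Type} [CommSemiring B] (k : ℕ) :
    (∏ i ∈ Finset.range k, ((0:B) + 1 + (i:B))) = ((Nat.factorial k : ℕ) : B) := by
  induction k with
  | zero => simp
  | succ k ih => rw [Finset.prod_range_succ, ih, Nat.factorial_succ]; push_cast; ring


lemma cyclic_lemmaA {B M : Type} [Field B] [CharZero B] [AddCommGroup M] [Module B M]
    (nab : M → M)
    (hiter_add : ∀ (r : ℕ) (x y : M), nab^[r] (x + y) = nab^[r] x + nab^[r] y)
    (hiter_nat : ∀ (ν : ℕ) (r : ℕ) (x : M), nab^[r] ((ν : B) • x) = (ν : B) • nab^[r] x)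
    (k : ℕ)
    (hcon : ∀ m' : M, ¬ LinearIndependent B (fun i : Fin (k+1) => nab^[(i:ℕ)] m'))
    (m : M) (hm : LinearIndependent B (fun i : Fin k => nab^[(i:ℕ)] m))
    (a : Fin k → B)
    (ha : ∑ i : Fin k, a i • nab^[(i:ℕ)] m = nab^[k] m)
    (f : M) :
    nab^[k] f - ∑ i : Fin k, a i • nab^[(i:ℕ)] f ∈
      Submodule.span B (Set.range (fun i : Fin k => nab^[(i:ℕ)] m)) := by
  classical
  set w : Fin k → M := fun i => nab^[(i:ℕ)] m with hw
  set W := Submodule.span B (Set.range w) with hWdef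
  set x0 : M := nab^[k] f - ∑ i : Fin k, a i • nab^[(i:ℕ)] f with hx0
  suffices hdual : ∀ φ : Module.Dual B M, (∀ y ∈ W, φ y = 0) → φ x0 = 0 by
    by_contra hx
    have h1 : ∀ ψ : Module.Dual B (M ⧸ W), ψ (W.mkQ x0) = 0 := by
      intro ψ
      refine hdual (ψ.comp W.mkQ) (fun y hy => ?_)
      simp [(Submodule.Quotient.mk_eq_zero W).2 hy]
    have h2 := (Module.forall_dual_apply_eq_zero_iff B (W.mkQ x0)).1 h1
    rw [Submodule.mkQ_apply, Submodule.Quotient.mk_eq_zero] at h2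
    exact hx h2
  intro φ hφ
  obtain ⟨W', hW'⟩ := W.exists_isCompl
  set π := W.linearProjOfIsCompl W' hW' with hπ
  set bw : Module.Basis (Fin k) B W := Module.Basis.span hm with hbw
  set ψ : Fin k → Module.Dual B M := fun i => (bw.coord i).comp π with hψ
  set T : M →ₗ[B] (Fin (k+1) → B) :=
    LinearMap.pi (fun j => Fin.lastCases (motive := fun _ => Module.Dual B M) φ ψ j) with hT
  have hT_last : ∀ x, T x (Fin.last k) = φ x := by intro x; simp [hT, LinearMap.pi_apply]
  have hT_cast : ∀ x (i : Fin k), T x (Fin.castSucc i) = ψ i x := by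
    intro x i; simp [hT, LinearMap.pi_apply]
  have hwW : ∀ i : Fin k, w i ∈ W := fun i => Submodule.subset_span ⟨i, rfl⟩
  have hTw : ∀ i : Fin k, T (w i) = Pi.single (Fin.castSucc i) 1 := by
    intro i; funext j
    refine Fin.lastCases ?_ (fun jj => ?_) j
    · rw [hT_last, hφ _ (hwW i), Pi.single_eq_of_ne (Fin.castSucc_lt_last i).ne']
    · rw [hT_cast]
      have h1 : π (w i) = bw i := by
        have h0 : w i = ((⟨w i, hwW i⟩ : W) : M) := rfl
        rw [h0, show π ((⟨w i, hwW i⟩ : W) : M) = ⟨w i, hwW i⟩ from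
          Submodule.linearProjOfIsCompl_apply_left hW' _]
        exact (Module.Basis.span_apply hm i).symm
      simp only [hψ, LinearMap.comp_apply, h1, Module.Basis.coord_apply, Module.Basis.repr_self]
      rcases eq_or_ne jj i with h | h
      · subst h; simp
      · rw [Finsupp.single_apply, Pi.single_apply, if_neg (by simpa using h.symm),
          if_neg (by simp [Fin.castSucc_inj]; exact h)]
  -- matrices
  set A0 : Matrix (Fin (k+1)) (Fin (k+1)) B := Matrix.of fun i j => T (nab^[(i:ℕ)] m) j with hA0
  set A1 : Matrix (Fin (k+1)) (Fin (k+1)) B := Matrix.of fun i j => T (nab^[(i:ℕ)] f) j with hA1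
  have hdet : ∀ ν : ℕ, (Matrix.of fun i j => A0 i j + (ν:B) * A1 i j).det = 0 := by
    intro ν
    obtain ⟨g, hg, i0, hi0⟩ := Fintype.not_linearIndependent_iff.1 (hcon (m + (ν:B) • f))
    rw [← Matrix.exists_vecMul_eq_zero_iff]
    refine ⟨g, fun h0 => hi0 (by rw [h0]; rfl), ?_⟩
    funext j
    have hfam : ∀ i : Fin (k+1), nab^[(i:ℕ)] (m + (ν:B) • f)
        = nab^[(i:ℕ)] m + (ν:B) • nab^[(i:ℕ)] f := fun i => by
      rw [hiter_add, hiter_nat]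
    have h2 : T (∑ i : Fin (k+1), g i • nab^[(i:ℕ)] (m + (ν:B) • f)) j = 0 := by
      rw [hg]; simp
    rw [map_sum] at h2
    simp only [Finset.sum_apply, map_smul, Pi.smul_apply, smul_eq_mul] at h2
    have h3 : ∀ i : Fin (k+1),
        g i * T (nab^[(i:ℕ)] (m + (ν:B) • f)) j = g i * (A0 i j + (ν:B) * A1 i j) := by
      intro i
      rw [hfam i, map_add, map_smul]
      simp [hA0, hA1, smul_eq_mul]
    rw [Finset.sum_congr rfl (fun i _ => h3 i)] at h2
    simpa [Matrix.vecMul, dotProduct] using h2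
  -- polynomial matrix
  set P : Matrix (Fin (k+1)) (Fin (k+1)) B[X] :=
    Matrix.of fun i j => (X : B[X]) * C (A1 i j) + C (A0 i j) with hP
  have hq0 : P.det = 0 := by
    apply Polynomial.eq_zero_of_infinite_isRoot
    apply Set.infinite_of_injective_forall_mem
      (f := fun ν : ℕ => (ν : B)) (Nat.cast_injective)
    intro ν
    show P.det.IsRoot ((ν : ℕ) : B)
    have hmap : P.map (⇑(Polynomial.evalRingHom ((ν:ℕ):B)))
        = Matrix.of fun i j => A0 i j + (ν:B) * A1 i j := by
      ext i j
      simp only [Matrix.map_apply, hP, Matrix.of_apply, map_add, map_mul,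
        Polynomial.coe_evalRingHom, Polynomial.eval_X, Polynomial.eval_C, Polynomial.eval_mul,
        Polynomial.eval_add]
      ring
    have := (Polynomial.evalRingHom ((ν:ℕ):B)).map_det P
    rw [RingHom.mapMatrix_apply, hmap, hdet ν] at this
    simpa [Polynomial.IsRoot] using this
  -- expansion
  set v0 : Fin (k+1) → (Fin (k+1) → B[X]) := fun i j => C (A0 i j) with hv0
  set v1 : Fin (k+1) → (Fin (k+1) → B[X]) := fun i j => C (A1 i j) with hv1
  set vX : Fin (k+1) → (Fin (k+1) → B[X]) := fun i => (X : B[X]) • v1 i with hvX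
  set D' := (Matrix.detRowAlternating (R := B[X]) (n := Fin (k+1))).toMultilinearMap with hD'
  have hexp : P.det = ∑ s : Finset (Fin (k+1)),
      (X : B[X]) ^ s.card * C ((Matrix.of fun i j => if i ∈ s then A1 i j else A0 i j).det) := by
    have h0 : P.det = D' (vX + v0) := by
      have : P = (Matrix.of fun i j => (vX + v0) i j) := by
        funext i j; simp [hP, hvX, hv1, hv0, smul_eq_mul]
      rw [this]; rfl
    rw [h0, MultilinearMap.map_add_univ]
    refine Finset.sum_congr rfl (fun s _ => ?_)
    have h1 : s.piecewise vX v0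
        = s.piecewise (fun i => (X:B[X]) • (s.piecewise v1 v0) i) (s.piecewise v1 v0) := by
      funext i
      by_cases h : i ∈ s <;>
        simp [Finset.piecewise_eq_of_mem, Finset.piecewise_eq_of_notMem, h, hvX]
    rw [h1, MultilinearMap.map_piecewise_smul]
    have h2 : s.piecewise v1 v0 = fun i j => C (if i ∈ s then A1 i j else A0 i j) := by
      funext i j
      by_cases h : i ∈ s <;> simp [Finset.piecewise, h, hv1, hv0]
    have h3 : D' (s.piecewise v1 v0)
        = C ((Matrix.of fun i j => if i ∈ s then A1 i j else A0 i j).det) := by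
      rw [h2]
      have h4 : (Matrix.of fun i j => if i ∈ s then A1 i j else A0 i j).map
          (C : B →+* B[X]) = Matrix.of (fun i j => C (if i ∈ s then A1 i j else A0 i j)) := by
        ext i j; simp [Matrix.map_apply]
      have h5 := (C : B →+* B[X]).map_det (Matrix.of fun i j => if i ∈ s then A1 i j else A0 i j)
      rw [RingHom.mapMatrix_apply, h4] at h5
      exact h5.symm
    rw [h3, Finset.prod_const, smul_eq_mul]
  have hc1 : ∑ s : Finset (Fin (k+1)),
      (if s.card = 1 then (Matrix.of fun i j => if i ∈ s then A1 i j else A0 i j).det else 0)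
      = 0 := by
    have h0 := congrArg (fun p : B[X] => p.coeff 1) hq0
    rw [hexp] at h0
    simp only [Polynomial.finset_sum_coeff] at h0
    have h1 : ∀ s : Finset (Fin (k+1)),
        ((X : B[X]) ^ s.card * C ((Matrix.of fun i j => if i ∈ s then A1 i j else A0 i j).det)).coeff 1
        = (if s.card = 1 then (Matrix.of fun i j => if i ∈ s then A1 i j else A0 i j).det else 0) := by
      intro s
      rw [mul_comm, Polynomial.C_mul_X_pow_eq_monomial, Polynomial.coeff_monomial]
    rw [Finset.sum_congr rfl (fun s _ => h1 s)] at h0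
    simpa using h0
  have hsing : ∑ j : Fin (k+1), (A0.updateRow j (A1 j)).det = 0 := by
    rw [← Finset.sum_filter] at hc1
    have himg : (Finset.univ.filter (fun s : Finset (Fin (k+1)) => s.card = 1))
        = Finset.univ.image (fun j : Fin (k+1) => ({j} : Finset (Fin (k+1)))) := by
      ext s
      constructor
      · intro hs
        obtain ⟨x, hx⟩ := Finset.card_eq_one.1 (Finset.mem_filter.1 hs).2
        exact Finset.mem_image.2 ⟨x, Finset.mem_univ x, hx.symm⟩
      · intro hs
        obtain ⟨x, -, hx⟩ := Finset.mem_image.1 hs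
        exact Finset.mem_filter.2 ⟨Finset.mem_univ s, by rw [← hx]; simp⟩
    rw [himg, Finset.sum_image (fun x _ y _ h => Finset.singleton_injective h)] at hc1
    have hmat : ∀ j : Fin (k+1),
        (Matrix.of fun i j' => if i ∈ ({j} : Finset (Fin (k+1))) then A1 i j' else A0 i j')
        = A0.updateRow j (A1 j) := by
      intro j; ext i j'
      rcases eq_or_ne i j with h | h <;> simp [Matrix.updateRow_apply, h]
    calc ∑ j : Fin (k+1), (A0.updateRow j (A1 j)).det
        = ∑ j : Fin (k+1),
          (Matrix.of fun i j' => if i ∈ ({j} : Finset (Fin (k+1))) then A1 i j' else A0 i j').det :=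
          Finset.sum_congr rfl (fun j _ => by rw [hmat j])
      _ = 0 := hc1
  set Dm := (Matrix.detRowAlternating (R := B) (n := Fin (k+1))).compLinearMap T with hDm
  set F0 : Fin (k+1) → M := fun i => nab^[(i:ℕ)] m with hF0
  have hrow : ∀ j : Fin (k+1), (A0.updateRow j (A1 j)).det
      = Dm (Function.update F0 j (nab^[(j:ℕ)] f)) := by
    intro j
    have h1 : A0.updateRow j (A1 j)
        = Matrix.of fun i j' => T (Function.update F0 j (nab^[(j:ℕ)] f) i) j' := by
      ext i j'
      rcases eq_or_ne i j with h | h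
      · subst h; simp [Matrix.updateRow_apply, Function.update_self, hA1, hF0]
      · simp [Matrix.updateRow_apply, Function.update_of_ne h, h, hA0, hF0]
    rw [h1]
    rfl
  have heval : ∀ x : M, Dm (Function.update F0 (Fin.last k) x) = φ x := by
    intro x
    have h1 : (Matrix.of fun i j' => T (Function.update F0 (Fin.last k) x i) j')
        = (1 : Matrix (Fin (k+1)) (Fin (k+1)) B).updateRow (Fin.last k) (T x) := by
      ext i j'
      refine Fin.lastCases ?_ (fun ii => ?_) i
      · simp [Matrix.updateRow_apply, Function.update_self]
      · have hne : Fin.castSucc ii ≠ Fin.last k := (Fin.castSucc_lt_last ii).ne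
        rw [Matrix.of_apply, Function.update_of_ne hne, Matrix.updateRow_apply, if_neg hne]
        have h2 : F0 (Fin.castSucc ii) = w ii := by simp [hF0, hw]
        rw [h2, hTw]
        simp [Matrix.one_apply, Pi.single_apply, eq_comm]
    have h3 : Dm (Function.update F0 (Fin.last k) x)
        = ((1 : Matrix (Fin (k+1)) (Fin (k+1)) B).updateRow (Fin.last k) (T x)).det := by
      rw [← h1]; rfl
    rw [h3, ← Matrix.cramer_transpose_apply, Matrix.transpose_one, Matrix.cramer_one]
    exact hT_last x
  have hterm2 : ∀ j : Fin k, Dm (Function.update F0 (Fin.castSucc j) (nab^[(j:ℕ)] f))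
      = -(a j * φ (nab^[(j:ℕ)] f)) := by
    intro j
    set G := Function.update F0 (Fin.castSucc j) (nab^[(j:ℕ)] f) with hG
    have hGlast : G (Fin.last k) = ∑ i : Fin k, a i • w i := by
      rw [hG, Function.update_of_ne (Fin.castSucc_lt_last j).ne']
      show nab^[((Fin.last k : ℕ))] m = _
      rw [Fin.val_last, ← ha]
    have h1 : Dm G = Dm (Function.update G (Fin.last k) (∑ i : Fin k, a i • w i)) := by
      rw [← hGlast, Function.update_eq_self]
    have h2 : Dm (Function.update G (Fin.last k) (∑ i : Fin k, a i • w i))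
        = ∑ i : Fin k, Dm (Function.update G (Fin.last k) (a i • w i)) :=
      Dm.toMultilinearMap.map_update_sum Finset.univ (Fin.last k) (fun i => a i • w i) G
    have h2' : ∀ i : Fin k, Dm (Function.update G (Fin.last k) (a i • w i))
        = a i • Dm (Function.update G (Fin.last k) (w i)) :=
      fun i => Dm.toMultilinearMap.map_update_smul G (Fin.last k) (a i) (w i)
    have h3 : ∀ i : Fin k, i ≠ j → Dm (Function.update G (Fin.last k) (w i)) = 0 := by
      intro i hij
      have hval : (Function.update G (Fin.last k) (w i)) (Fin.castSucc i)
          = (Function.update G (Fin.last k) (w i)) (Fin.last k) := by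
        rw [Function.update_self, Function.update_of_ne (Fin.castSucc_lt_last i).ne, hG,
          Function.update_of_ne (by simpa [Fin.castSucc_inj] using hij)]
        simp [hF0, hw]
      exact Dm.map_eq_zero_of_eq _ hval (Fin.castSucc_lt_last i).ne
    have h4 : Dm (Function.update G (Fin.last k) (w j)) = - φ (nab^[(j:ℕ)] f) := by
      set U := Function.update F0 (Fin.last k) (nab^[(j:ℕ)] f) with hU
      have hcomp : Function.update G (Fin.last k) (w j)
          = U ∘ Equiv.swap (Fin.castSucc j) (Fin.last k) := by
        funext i
        rcases eq_or_ne i (Fin.castSucc j) with h | h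
        · subst h
          rw [Function.comp_apply, Equiv.swap_apply_left, hU, Function.update_self,
            Function.update_of_ne (Fin.castSucc_lt_last j).ne, hG, Function.update_self]
        · rcases eq_or_ne i (Fin.last k) with h2 | h2
          · subst h2
            rw [Function.comp_apply, Equiv.swap_apply_right, hU,
              Function.update_of_ne (Fin.castSucc_lt_last j).ne, Function.update_self]
            simp [hF0, hw]
          · rw [Function.comp_apply, Equiv.swap_apply_of_ne_of_ne h h2,
              Function.update_of_ne h2, hG, Function.update_of_ne h, hU,
              Function.update_of_ne h2]
      rw [hcomp, Dm.map_swap U ((Fin.castSucc_lt_last j).ne), heval]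
    calc Dm G = ∑ i : Fin k, a i • Dm (Function.update G (Fin.last k) (w i)) := by
          rw [h1, h2]; exact Finset.sum_congr rfl (fun i _ => h2' i)
      _ = a j • Dm (Function.update G (Fin.last k) (w j)) := by
          refine Finset.sum_eq_single j (fun i _ hij => ?_) (by simp)
          rw [h3 i hij, smul_zero]
      _ = -(a j * φ (nab^[(j:ℕ)] f)) := by rw [h4, smul_eq_mul, mul_neg]
  have hsum2 : ∑ j : Fin (k+1), Dm (Function.update F0 j (nab^[(j:ℕ)] f)) = 0 := by
    calc ∑ j : Fin (k+1), Dm (Function.update F0 j (nab^[(j:ℕ)] f))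
        = ∑ j : Fin (k+1), (A0.updateRow j (A1 j)).det :=
          Finset.sum_congr rfl (fun j _ => (hrow j).symm)
      _ = 0 := hsing
  rw [Fin.sum_univ_castSucc] at hsum2
  simp only [Fin.coe_castSucc, Fin.val_last] at hsum2
  rw [Finset.sum_congr rfl (fun j _ => hterm2 j), heval] at hsum2
  have hφx : φ x0 = φ (nab^[k] f) - ∑ i : Fin k, a i * φ (nab^[(i:ℕ)] f) := by
    simp [hx0, map_sub, map_sum, map_smul, smul_eq_mul]
  rw [hφx, sub_eq_zero]
  rw [Finset.sum_neg_distrib] at hsum2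
  linear_combination hsum2

lemma cyclic_step {B M : Type} [Field B] [CharZero B] [AddCommGroup M] [Module B M]
    [FiniteDimensional B M]
    (d : B → B) (nab : M → M)
    (hadd : ∀ x y, nab (x + y) = nab x + nab y)
    (hL : ∀ (b : B) (x : M), nab (b • x) = d b • x + b • nab x)
    (hdnat : ∀ ν : ℕ, d ((ν : ℕ) : B) = 0)
    (t : B) (ht : d t = 1)
    (n : ℕ) (hrank : Module.finrank B M = n)
    (k : ℕ) (hk : k < n)
    (hcon : ∀ m' : M, ¬ LinearIndependent B (fun i : Fin (k+1) => nab^[(i:ℕ)] m'))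
    (m : M) (hm : LinearIndependent B (fun i : Fin k => nab^[(i:ℕ)] m)) :
    False := by
  classical
  -- basic facts
  have hnab0 : nab 0 = 0 := by
    have h := hadd 0 0
    rw [add_zero] at h
    exact (left_eq_add.1 h)
  have hiter_add : ∀ (r : ℕ) (x y : M), nab^[r] (x + y) = nab^[r] x + nab^[r] y := by
    intro r
    induction r with
    | zero => intro x y; rfl
    | succ r ih =>
      intro x y
      rw [Function.iterate_succ_apply' nab r, Function.iterate_succ_apply' nab r,
        Function.iterate_succ_apply' nab r, ih, hadd]
  have hsmul_nat : ∀ (ν : ℕ) (x : M), nab (((ν:ℕ):B) • x) = ((ν:ℕ):B) • nab x := by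
    intro ν x
    rw [hL, hdnat, zero_smul, zero_add]
  have hiter_nat : ∀ (ν : ℕ) (r : ℕ) (x : M), nab^[r] (((ν:ℕ):B) • x) = ((ν:ℕ):B) • nab^[r] x := by
    intro ν r
    induction r with
    | zero => intro x; rfl
    | succ r ih =>
      intro x
      rw [Function.iterate_succ_apply' nab r, Function.iterate_succ_apply' nab r, ih, hsmul_nat]
  have hiter_t : ∀ (r : ℕ) (x : M), nab^[r+1] (t • x)
      = t • nab^[r+1] x + (((r:ℕ)+1 : ℕ) : B) • nab^[r] x := by
    intro r
    induction r with
    | zero =>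
      intro x
      have h := hL t x
      rw [ht] at h
      simpa [h] using by module
    | succ r ih =>
      intro x
      rw [Function.iterate_succ_apply' nab (r+1) (t • x), ih x, hadd, hL t, ht,
        hsmul_nat (r+1), ← Function.iterate_succ_apply' nab (r+1) x,
        ← Function.iterate_succ_apply' nab r x]
      push_cast
      module
  -- coefficients of ∇^k m
  have hsnoc : (fun i : Fin (k+1) => nab^[(i:ℕ)] m)
      = Fin.snoc (fun i : Fin k => nab^[(i:ℕ)] m) (nab^[k] m) := by
    funext i
    refine Fin.lastCases ?_ (fun ii => ?_) i
    · simp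
    · simp
  have hmem : nab^[k] m ∈ Submodule.span B (Set.range (fun i : Fin k => nab^[(i:ℕ)] m)) := by
    by_contra hmem
    exact hcon m (by rw [hsnoc]; exact linearIndependent_fin_snoc.2 ⟨hm, hmem⟩)
  obtain ⟨a, ha⟩ := (Submodule.mem_span_range_iff_exists_fun B).1 hmem
  have hA := cyclic_lemmaA nab hiter_add hiter_nat k hcon m hm a ha
  set W := Submodule.span B (Set.range (fun i : Fin k => nab^[(i:ℕ)] m)) with hW
  set γ0 : ℕ → B := fun j => if h : j < k then -(a ⟨j, h⟩) else if j = k then 1 else 0 with hγ0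
  have hγ0tail : ∀ j, k < j → γ0 j = 0 := by
    intro j hj
    simp only [hγ0]
    rw [dif_neg (by omega), if_neg (by omega)]
  have hγ0k : γ0 k = 1 := by
    simp only [hγ0]
    rw [dif_neg (by omega)]
    simp
  have hbase : ∀ f, (∑ j ∈ Finset.range (k+1), γ0 j • nab^[j] f) ∈ W := by
    intro f
    have h1 : ∑ j ∈ Finset.range (k+1), γ0 j • nab^[j] f
        = nab^[k] f - ∑ i : Fin k, a i • nab^[(i:ℕ)] f := by
      rw [Finset.sum_range_succ, hγ0k, one_smul]
      have h3 : ∑ j ∈ Finset.range k, γ0 j • nab^[j] f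
          = ∑ i : Fin k, -(a i • nab^[(i:ℕ)] f) := by
        rw [← Fin.sum_univ_eq_sum_range (fun j => γ0 j • nab^[j] f) k]
        refine Finset.sum_congr rfl (fun i _ => ?_)
        simp only [hγ0]
        rw [dif_pos i.isLt, neg_smul]
      rw [h3, Finset.sum_neg_distrib]
      abel
    rw [h1]
    exact hA f
  have hstep : ∀ γ : ℕ → B, (∀ j, k < j → γ j = 0) →
      (∀ f, (∑ j ∈ Finset.range (k+1), γ j • nab^[j] f) ∈ W) →
      (∀ f, (∑ j ∈ Finset.range (k+1), (((j:B) + 1) * γ (j+1)) • nab^[j] f) ∈ W) := by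
    intro γ htail hγ f
    have h1 := hγ (t • f)
    have h2 : ∑ j ∈ Finset.range (k+1), γ j • nab^[j] (t • f)
        = t • (∑ j ∈ Finset.range (k+1), γ j • nab^[j] f)
          + ∑ j ∈ Finset.range (k+1), ((j:B) * γ j) • nab^[j-1] f := by
      rw [Finset.smul_sum, ← Finset.sum_add_distrib]
      refine Finset.sum_congr rfl (fun j _ => ?_)
      cases j with
      | zero =>
        simp only [Function.iterate_zero, id_eq, Nat.cast_zero, zero_mul, zero_smul, add_zero,
          Nat.zero_sub]
        rw [smul_comm]
      | succ r =>
        rw [hiter_t r f, smul_add, Nat.succ_sub_one]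
        congr 1
        · rw [smul_comm]
        · rw [smul_smul, mul_comm]
    rw [h2] at h1
    have h3 : (∑ j ∈ Finset.range (k+1), ((j:B) * γ j) • nab^[j-1] f) ∈ W := by
      have h4 := W.sub_mem h1 (W.smul_mem t (hγ f))
      simpa [add_sub_cancel_left] using h4
    have h4 : ∑ j ∈ Finset.range (k+1), ((j:B) * γ j) • nab^[j-1] f
        = ∑ j ∈ Finset.range (k+1), (((j:B) + 1) * γ (j+1)) • nab^[j] f := by
      rw [Finset.sum_range_succ' (fun j => ((j:B) * γ j) • nab^[j-1] f) k,
        Finset.sum_range_succ (fun j => (((j:B) + 1) * γ (j+1)) • nab^[j] f) k,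
        htail (k+1) (by omega), mul_zero, zero_smul, add_zero]
      simp only [Nat.cast_zero, zero_mul, zero_smul, add_zero, Nat.succ_sub_one]
      refine Finset.sum_congr rfl (fun j _ => ?_)
      push_cast
      ring_nf
    rw [h4] at h3
    exact h3
  set Dop : (ℕ → B) → (ℕ → B) := fun γ j => ((j:B) + 1) * γ (j+1) with hDop
  have hformula : ∀ (r : ℕ) (γ : ℕ → B) (j : ℕ),
      Dop^[r] γ j = (∏ i ∈ Finset.range r, ((j:B) + 1 + (i:B))) * γ (j + r) := by
    intro r
    induction r with
    | zero => intro γ j; simp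
    | succ r ih =>
      intro γ j
      rw [Function.iterate_succ_apply, ih (Dop γ) j]
      have hD : (Dop γ) (j + r) = (((j+r : ℕ):B) + 1) * γ (j + r + 1) := rfl
      rw [hD, Finset.prod_range_succ]
      have : j + (r+1) = j + r + 1 := by omega
      rw [this]
      push_cast
      ring
  have hiterW : ∀ r : ℕ, ∀ f, (∑ j ∈ Finset.range (k+1), (Dop^[r] γ0) j • nab^[j] f) ∈ W := by
    intro r
    induction r with
    | zero => simpa using hbase
    | succ r ih =>
      have htail' : ∀ j, k < j → (Dop^[r] γ0) j = 0 := by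
        intro j hj
        rw [hformula, hγ0tail (j + r) (by omega), mul_zero]
      intro f
      have h5 := hstep (Dop^[r] γ0) htail' ih f
      rw [Function.iterate_succ_apply' Dop r γ0]
      exact h5
  have hfac : ∀ f : M, ((Nat.factorial k : ℕ) : B) • f ∈ W := by
    intro f
    have h := hiterW k f
    have h1 : ∀ j ∈ Finset.range (k+1), j ≠ 0 → (Dop^[k] γ0) j • nab^[j] f = 0 := by
      intro j _ hj
      rw [hformula, hγ0tail (j + k) (by omega), mul_zero, zero_smul]
    rw [Finset.sum_eq_single 0 h1 (by simp)] at h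
    have h2 : (Dop^[k] γ0) 0 = ((Nat.factorial k : ℕ) : B) := by
      rw [hformula, zero_add, hγ0k, mul_one]
      simpa using cyclic_prod_fac (B := B) k
    rw [h2] at h
    exact h
  have hWtop : W = ⊤ := by
    rw [Submodule.eq_top_iff']
    intro f
    have h := hfac f
    have hne : ((Nat.factorial k : ℕ) : B) ≠ 0 := Nat.cast_ne_zero.2 (Nat.factorial_ne_zero k)
    have h2 := W.smul_mem (((Nat.factorial k : ℕ) : B)⁻¹) h
    rwa [smul_smul, inv_mul_cancel₀ hne, one_smul] at h2
  have hfr : Module.finrank B ↥W = k := by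
    rw [hW, finrank_span_eq_card hm]
    simp
  rw [hWtop, finrank_top] at hfr
  omega


lemma cyclic_main {B M : Type} [Field B] [CharZero B] [AddCommGroup M] [Module B M]
    [FiniteDimensional B M]
    (d : B → B) (nab : M → M)
    (hadd : ∀ x y, nab (x + y) = nab x + nab y)
    (hL : ∀ (b : B) (x : M), nab (b • x) = d b • x + b • nab x)
    (hdnat : ∀ ν : ℕ, d ((ν:ℕ) : B) = 0)
    (t : B) (ht : d t = 1)
    (n : ℕ) (hrank : Module.finrank B M = n) :
    ∃ m : M, LinearIndependent B (fun i : Fin n => nab^[(i:ℕ)] m) := by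
  have key : ∀ k : ℕ, k ≤ n → ∃ m : M, LinearIndependent B (fun i : Fin k => nab^[(i:ℕ)] m) := by
    intro k
    induction k with
    | zero => intro _; exact ⟨0, linearIndependent_empty_type⟩
    | succ k ih =>
      intro hk
      obtain ⟨m, hm⟩ := ih (by omega)
      by_contra hcon
      push_neg at hcon
      exact cyclic_step d nab hadd hL hdnat t ht n hrank k (by omega) (fun m' => hcon m') m hm
  exact key n le_rfl

/-- Deligne's theorem: over a field of characteristic 0 with a nontrivial derivation,
every finite-rank differential module admits a cyclic vector. -/
theorem stmt10 (B M : Type) [Field B] [CharZero B] [AddCommGroup M] [Module B M]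
    (d : B → B)
    (hd_add : ∀ x y, d (x + y) = d x + d y)
    (hd_mul : ∀ x y, d (x * y) = x * d y + d x * y)
    (hd_ne : ∃ b, d b ≠ 0)
    (n : ℕ) (e : Module.Basis (Fin n) B M)
    (nab : M → M) (hadd : ∀ x y, nab (x + y) = nab x + nab y)
    (hL : ∀ (b : B) (m : M), nab (b • m) = d b • m + b • nab m) :
    ∃ (m : M) (b : Module.Basis (Fin n) B M), ∀ i : Fin n, b i = nab^[(i : ℕ)] m := by
  classical
  rcases Nat.eq_zero_or_pos n with hn | hn
  · subst hn
    exact ⟨0, e, fun i => i.elim0⟩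
  haveI : Nonempty (Fin n) := ⟨⟨0, hn⟩⟩
  have hd0 : d 0 = 0 := by
    have h := hd_add 0 0
    rw [add_zero] at h
    exact (left_eq_add.1 h)
  have hd1 : d 1 = 0 := by
    have h := hd_mul 1 1
    simp only [mul_one, one_mul] at h
    exact (right_eq_add.1 h)
  have hdnat : ∀ ν : ℕ, d ((ν:ℕ) : B) = 0 := by
    intro ν
    induction ν with
    | zero => simpa using hd0
    | succ ν ih => push_cast; rw [hd_add, ih, hd1, add_zero]
  have hnab0 : nab 0 = 0 := by
    have h := hadd 0 0
    rw [add_zero] at h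
    exact (left_eq_add.1 h)
  obtain ⟨t0, ht0⟩ := hd_ne
  set c := d t0 with hc
  set d' : B → B := fun x => c⁻¹ * d x with hd'
  set nab' : M → M := fun x => c⁻¹ • nab x with hnab'
  have hadd' : ∀ x y, nab' (x + y) = nab' x + nab' y := by
    intro x y; simp only [hnab', hadd, smul_add]
  have hL' : ∀ (b : B) (x : M), nab' (b • x) = d' b • x + b • nab' x := by
    intro b x
    simp only [hnab', hd', hL]
    rw [smul_add, smul_smul, smul_comm c⁻¹ b]
  have hd'nat : ∀ ν : ℕ, d' ((ν:ℕ):B) = 0 := fun ν => by simp [hd', hdnat]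
  have hd't : d' t0 = 1 := by
    simp only [hd', ← hc]
    exact inv_mul_cancel₀ ht0
  have hfin : FiniteDimensional B M := Module.Finite.of_basis e
  have hrank : Module.finrank B M = n := by rw [Module.finrank_eq_card_basis e, Fintype.card_fin]
  obtain ⟨m, hm⟩ := cyclic_main d' nab' hadd' hL' hd'nat t0 hd't n hrank
  have hsp' : Submodule.span B (Set.range (fun i : Fin n => nab'^[(i:ℕ)] m)) = ⊤ := by
    have h := (basisOfLinearIndependentOfCardEqFinrank hm (by simp [hrank])).span_eq
    rwa [coe_basisOfLinearIndependentOfCardEqFinrank] at h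
  have htrans : ∀ i : ℕ,
      nab'^[i] m ∈ Submodule.span B ((fun j : ℕ => nab^[j] m) '' {j | j ≤ i}) := by
    intro i
    induction i with
    | zero => exact Submodule.subset_span ⟨0, by simp, rfl⟩
    | succ i ih =>
      rw [Function.iterate_succ_apply' nab']
      have hmain : ∀ x, x ∈ Submodule.span B ((fun j : ℕ => nab^[j] m) '' {j | j ≤ i}) →
          x ∈ Submodule.span B ((fun j : ℕ => nab^[j] m) '' {j | j ≤ i+1})
          ∧ nab x ∈ Submodule.span B ((fun j : ℕ => nab^[j] m) '' {j | j ≤ i+1}) := by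
        intro x hx
        induction hx using Submodule.span_induction with
        | mem y hy =>
          obtain ⟨j, hj, rfl⟩ := hy
          refine ⟨Submodule.subset_span ⟨j, by simp only [Set.mem_setOf_eq] at hj ⊢; omega, rfl⟩, ?_⟩
          refine Submodule.subset_span ⟨j+1, by simp only [Set.mem_setOf_eq] at hj ⊢; omega, ?_⟩
          exact (Function.iterate_succ_apply' nab j m)
        | zero => exact ⟨Submodule.zero_mem _, by rw [hnab0]; exact Submodule.zero_mem _⟩
        | add y z hy hz ihy ihz =>
          exact ⟨Submodule.add_mem _ ihy.1 ihz.1,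
            by rw [hadd]; exact Submodule.add_mem _ ihy.2 ihz.2⟩
        | smul b y hy ihy =>
          refine ⟨Submodule.smul_mem _ b ihy.1, ?_⟩
          rw [hL]
          exact Submodule.add_mem _ (Submodule.smul_mem _ _ ihy.1) (Submodule.smul_mem _ _ ihy.2)
      have h2 := (hmain _ ih).2
      show c⁻¹ • nab (nab'^[i] m) ∈ _
      exact Submodule.smul_mem _ _ h2
  have hsp : Submodule.span B (Set.range (fun i : Fin n => nab^[(i:ℕ)] m)) = ⊤ := by
    rw [eq_top_iff, ← hsp', Submodule.span_le]
    rintro x ⟨i, rfl⟩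
    have h := htrans (i : ℕ)
    have hsub : ((fun j : ℕ => nab^[j] m) '' {j | j ≤ (i:ℕ)})
        ⊆ Set.range (fun j : Fin n => nab^[(j:ℕ)] m) := by
      rintro _ ⟨j, hj, rfl⟩
      simp only [Set.mem_setOf_eq] at hj
      exact ⟨⟨j, by omega⟩, rfl⟩
    exact (Submodule.span_mono hsub) h
  have hcard : Fintype.card (Fin n) = Module.finrank B M := by simp [hrank]
  refine ⟨m, basisOfTopLeSpanOfCardEqFinrank (fun i : Fin n => nab^[(i:ℕ)] m) hsp.ge hcard,
    fun i => ?_⟩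
  exact congrFun (coe_basisOfTopLeSpanOfCardEqFinrank _ _ _) i
end

section
/- Let B be a commutative ring, P(X) = Σ_{s=0}^{N} r_s X^s ∈ B[X] with r_0 = 1, k ⊆ B a field with more than N elements, t ∈ B, and a_0, ..., a_N distinct elements of k ∩ B^{d=0}. Then the ideal of B generated by the values P(t − a_0), ..., P(t − a_N) is the unit ideal. -/
/-- If `P(X) = Σ_{s≤N} r_s X^s` with `r_0 = 1` and `a_0, …, a_N` are distinct constants
in a field `k` contained in `B`, then the values `P(t − a_i)` generate the unit ideal. -/
theorem stmt12 (B k : Type) [CommRing B] [Field k] (φ : k →+* B)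
    (d : B → B) (hconst : ∀ x, d (φ x) = 0)
    (N : ℕ) (r : Fin (N + 1) → B) (hr0 : r 0 = 1)
    (a : Fin (N + 1) → k) (ha : Function.Injective a) (t : B) :
    Ideal.span (Set.range fun i : Fin (N + 1) =>
        ∑ s : Fin (N + 1), r s * (t - φ (a i)) ^ (s : ℕ)) = ⊤ := by
  classical
  set x : Fin (N + 1) → B := fun i => t - φ (a i) with hx
  set M := Matrix.vandermonde x with hM
  have hdet : IsUnit M.det := by
    rw [hM, Matrix.det_vandermonde]
    refine Finset.prod_induction _ IsUnit (fun _ _ => IsUnit.mul) isUnit_one fun i _ => ?_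
    refine Finset.prod_induction _ IsUnit (fun _ _ => IsUnit.mul) isUnit_one fun j hj => ?_
    have hij : i ≠ j := (Finset.mem_Ioi.mp hj).ne
    have : x j - x i = φ (a i - a j) := by simp only [hx, map_sub]; ring
    rw [this]
    exact (isUnit_iff_ne_zero.mpr (sub_ne_zero.mpr fun h => hij (ha h))).map φ
  have hv : M.mulVec r = fun i => ∑ s : Fin (N + 1), r s * (t - φ (a i)) ^ (s : ℕ) := by
    funext i
    simp [Matrix.mulVec, Matrix.vandermonde, dotProduct, mul_comm, hx, hM]
  have hr : r = M⁻¹.mulVec (M.mulVec r) := by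
    rw [Matrix.mulVec_mulVec, Matrix.nonsing_inv_mul M hdet, Matrix.one_mulVec]
  rw [Ideal.eq_top_iff_one, ← hr0]
  have h1 : r 0 = ∑ s : Fin (N + 1), M⁻¹ 0 s * (M.mulVec r) s := by
    conv_lhs => rw [hr]
    simp [Matrix.mulVec, dotProduct]
  rw [h1]
  refine Ideal.sum_mem _ fun s _ => Ideal.mul_mem_left _ _ ?_
  exact Ideal.subset_span ⟨s, by rw [hv]⟩
end
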